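/- For any weight function ω : X×X → ℤ on the complete directed graph on finite nonempty X, there exists a Schulze winner, i.e., a candidate x such that S[ω](x,y) ≥ S[ω](y,x) for all y ≠ x, provided ω is skew-symmetric. -/

import Mathlib

open scoped Classical

namespace Schulze

def pstr {X : Type} (ω : X → X → WithTop ℤ) : List X → WithTop ℤ
  | a :: b :: l => min (ω a b) (pstr ω (b :: l))
  | _ => ⊤

def IsPath {X : Type} (x y : X) (p : List X) : Prop :=
  p.Nodup ∧ p.head? = some x ∧ p.getLast? = some y

noncomputable def S {X : Type} [Fintype X] [DecidableEq X]
    (ω : X → X → WithTop ℤ) (x y : X) : WithBot (WithTop ℤ) :=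
  (Finset.univ.filter (fun p : {l : List X // l.Nodup} => IsPath x y p.1)).sup
    (fun p => ((pstr ω p.1 : WithTop ℤ) : WithBot (WithTop ℤ)))

def ofInt {X : Type} (ω : X → X → ℤ) : X → X → WithTop ℤ := fun x y => (ω x y : ℤ)

/-- splitting lemma for pstr across an interior vertex -/
lemma pstr_append {X : Type} (ω : X → X → WithTop ℤ) (v : X) :
    ∀ p q : List X, pstr ω (p ++ v :: q) = min (pstr ω (p ++ [v])) (pstr ω (v :: q)) := by
  intro p
  induction p with
  | nil =>
    intro q
    simp [pstr]
  | cons a p ih =>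
    intro q
    cases p with
    | nil =>
      cases q with
      | nil => simp [pstr]
      | cons b q => simp [pstr, min_assoc]
    | cons b p' =>
      have h1 : (a :: b :: p') ++ v :: q = a :: ((b :: p') ++ v :: q) := by simp
      have h2 : (a :: b :: p') ++ [v] = a :: ((b :: p') ++ [v]) := by simp
      rw [h1, h2]
      have e1 : pstr ω (a :: ((b :: p') ++ v :: q)) =
          min (ω a b) (pstr ω ((b :: p') ++ v :: q)) := by
        simp [pstr]
      have e2 : pstr ω (a :: ((b :: p') ++ [v])) =
          min (ω a b) (pstr ω ((b :: p') ++ [v])) := by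
        simp [pstr]
      rw [e1, e2, ih q, min_assoc]

lemma not_nodup_decomp {X : Type} :
    ∀ w : List X, ¬ w.Nodup → ∃ a : List X, ∃ v : X, ∃ b c : List X,
      w = a ++ v :: (b ++ v :: c) := by
  intro w
  induction w with
  | nil => intro h; exact absurd List.nodup_nil h
  | cons x w ih =>
    intro h
    rw [List.nodup_cons] at h
    push_neg at h
    by_cases hx : x ∈ w
    · obtain ⟨b, c, hbc⟩ := List.append_of_mem hx
      exact ⟨[], x, b, c, by simp [hbc]⟩
    · obtain ⟨a, v, b, c, habc⟩ := ih (h hx)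
      exact ⟨x :: a, v, b, c, by simp [habc]⟩

/-- every walk can be shortened to a nodup path of at least the same strength -/
lemma exists_nodup_of_walk {X : Type} (ω : X → X → WithTop ℤ) :
    ∀ n : ℕ, ∀ w : List X, w.length ≤ n →
      ∃ r : List X, r.Nodup ∧ r.head? = w.head? ∧ r.getLast? = w.getLast? ∧
        pstr ω w ≤ pstr ω r := by
  intro n
  induction n with
  | zero =>
    intro w hw
    have : w = [] := List.length_eq_zero_iff.mp (Nat.le_zero.mp hw)
    exact ⟨[], by simp [this, pstr]⟩
  | succ n ih =>
    intro w hw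
    by_cases hnd : w.Nodup
    · exact ⟨w, hnd, rfl, rfl, le_refl _⟩
    · obtain ⟨a, v, b, c, habc⟩ := not_nodup_decomp w hnd
      have hlen : (a ++ v :: c).length ≤ n := by
        have := hw
        rw [habc] at this
        simp at this ⊢
        omega
      obtain ⟨r, hr1, hr2, hr3, hr4⟩ := ih (a ++ v :: c) hlen
      refine ⟨r, hr1, ?_, ?_, ?_⟩
      · rw [hr2, habc, List.head?_append, List.head?_append]
        rfl
      · rw [hr3, habc, List.getLast?_append, List.getLast?_append]
        have : (v :: (b ++ v :: c)).getLast? = (v :: c).getLast? := by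
          rw [show v :: (b ++ v :: c) = (v :: b) ++ v :: c by simp,
            List.getLast?_append]
          exact Option.or_of_isSome (by simp [List.getLast?_isSome])
        rw [this]
      · refine le_trans ?_ hr4
        have e1 : pstr ω w = min (pstr ω (a ++ [v]))
            (min (pstr ω ((v :: b) ++ [v])) (pstr ω (v :: c))) := by
          rw [habc, pstr_append ω v a (b ++ v :: c),
            show v :: (b ++ v :: c) = (v :: b) ++ v :: c by simp,
            pstr_append ω v (v :: b) c]
        have e2 : pstr ω (a ++ v :: c) = min (pstr ω (a ++ [v])) (pstr ω (v :: c)) :=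
          pstr_append ω v a c
        rw [e1, e2]
        exact min_le_min (le_refl _) (min_le_right _ _)

variable {X : Type} [Fintype X] [DecidableEq X]

lemma le_S (ω : X → X → WithTop ℤ) {x y : X} {p : List X} (hp : p.Nodup)
    (h : IsPath x y p) : ((pstr ω p : WithTop ℤ) : WithBot (WithTop ℤ)) ≤ S ω x y := by
  refine Finset.le_sup (f := fun p : {l : List X // l.Nodup} =>
    ((pstr ω p.1 : WithTop ℤ) : WithBot (WithTop ℤ))) (b := ⟨p, hp⟩) ?_
  simp [h]

lemma S_exists (ω : X → X → WithTop ℤ) {x y : X} (hxy : x ≠ y) :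
    ∃ p : List X, IsPath x y p ∧ S ω x y = ((pstr ω p : WithTop ℤ) : WithBot (WithTop ℤ)) := by
  have hne : (Finset.univ.filter
      (fun p : {l : List X // l.Nodup} => IsPath x y p.1)).Nonempty := by
    refine ⟨⟨[x, y], by simp [hxy]⟩, ?_⟩
    simp only [Finset.mem_filter, Finset.mem_univ, true_and]
    simp [IsPath, hxy]
  obtain ⟨p, hp, hval⟩ := Finset.exists_mem_eq_sup _ hne
    (fun p : {l : List X // l.Nodup} => ((pstr ω p.1 : WithTop ℤ) : WithBot (WithTop ℤ)))
  simp only [Finset.mem_filter] at hp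
  exact ⟨p.1, hp.2, hval⟩

lemma S_triangle (ω : X → X → WithTop ℤ) {x y z : X} (hxy : x ≠ y) (hyz : y ≠ z) :
    min (S ω x y) (S ω y z) ≤ S ω x z := by
  obtain ⟨p, ⟨hpn, hph, hpl⟩, hpv⟩ := S_exists ω hxy
  obtain ⟨q, ⟨hqn, hqh, hql⟩, hqv⟩ := S_exists ω hyz
  have hpne : p ≠ [] := by rintro rfl; simp at hph
  obtain ⟨q', rfl⟩ : ∃ q', q = y :: q' := by
    cases q with
    | nil => simp at hqh
    | cons a q' => simp at hqh; exact ⟨q', by rw [hqh]⟩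
  have hq'ne : q' ≠ [] := by
    rintro rfl
    simp at hql
    exact hyz hql
  -- p = p.dropLast ++ [y]
  have hplast : p.getLast hpne = y := by
    have := List.getLast?_eq_getLast hpne
    rw [this] at hpl
    exact Option.some_injective _ hpl
  have hp_struct : p = p.dropLast ++ [y] := by
    conv_lhs => rw [← List.dropLast_append_getLast hpne]
    rw [hplast]
  set a := p.dropLast with ha
  -- the walk
  have hw1 : (a ++ y :: q').head? = some x := by
    rw [List.head?_append]
    have h' : p.head? = some x := hph
    rw [hp_struct, List.head?_append] at h'
    exact h'
  have hw2 : (a ++ y :: q').getLast? = some z := by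
    rw [List.getLast?_append]
    have : (y :: q').getLast? = some z := hql
    rw [this]
    simp [Option.or]
  have hw3 : pstr ω (a ++ y :: q') = min (pstr ω p) (pstr ω (y :: q')) := by
    rw [pstr_append, ← hp_struct]
  obtain ⟨r, hr1, hr2, hr3, hr4⟩ := exists_nodup_of_walk ω (a ++ y :: q').length
    (a ++ y :: q') (le_refl _)
  have hrS : ((pstr ω r : WithTop ℤ) : WithBot (WithTop ℤ)) ≤ S ω x z :=
    le_S ω hr1 ⟨hr1, hr2.trans hw1, hr3.trans hw2⟩
  calc min (S ω x y) (S ω y z)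
      = ((min (pstr ω p) (pstr ω (y :: q')) : WithTop ℤ) : WithBot (WithTop ℤ)) := by
        rw [hpv, hqv, WithBot.coe_min]
    _ = ((pstr ω (a ++ y :: q') : WithTop ℤ) : WithBot (WithTop ℤ)) := by rw [hw3]
    _ ≤ ((pstr ω r : WithTop ℤ) : WithBot (WithTop ℤ)) := by exact_mod_cast hr4
    _ ≤ S ω x z := hrS

lemma beats_trans (ω : X → X → WithTop ℤ) {x y z : X}
    (hxy : x ≠ y) (hyz : y ≠ z) (hxz : x ≠ z)
    (h1 : S ω y x < S ω x y) (h2 : S ω z y < S ω y z) : S ω z x < S ω x z := by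
  by_contra h
  push_neg at h
  have t1 := S_triangle ω hxy hyz
  have t2 := S_triangle ω hyz hxz.symm
  have t3 := S_triangle ω hxz.symm hxy
  rcases le_total (S ω x y) (S ω y z) with hc | hc
  · rw [min_eq_left hc] at t1
    have h3 : S ω x y ≤ S ω z x := le_trans t1 h
    exact absurd (le_trans (le_min hc h3) t2) (not_le.mpr h1)
  · rw [min_eq_right hc] at t1
    have h3 : S ω y z ≤ S ω z x := le_trans t1 h
    exact absurd (le_trans (le_min h3 hc) t3) (not_le.mpr h2)

lemma exists_winner (ω : X → X → WithTop ℤ) (s : Finset X) (hs : s.Nonempty) :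
    ∃ x ∈ s, ∀ y ∈ s, y ≠ x → S ω y x ≤ S ω x y := by
  classical
  induction s using Finset.induction_on with
  | empty => exact absurd hs (by simp)
  | @insert a s ha ih =>
    by_cases hse : s.Nonempty
    · obtain ⟨x, hx, hwin⟩ := ih hse
      have hax : a ≠ x := fun h => ha (h ▸ hx)
      by_cases hbeats : S ω x a < S ω a x
      · -- a is the new winner
        refine ⟨a, Finset.mem_insert_self a s, ?_⟩
        intro y hy hya
        rcases Finset.mem_insert.mp hy with rfl | hy'
        · exact absurd rfl hya
        · by_cases hyx : y = x
          · subst hyx; exact le_of_lt hbeats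
          · by_contra hc
            push_neg at hc
            have hay : a ≠ y := fun h => ha (h ▸ hy')
            have := beats_trans ω hay.symm hax hyx (hc) hbeats
            exact absurd (hwin y hy' hyx) (not_le.mpr this)
      · push_neg at hbeats
        refine ⟨x, Finset.mem_insert_of_mem hx, ?_⟩
        intro y hy hyx
        rcases Finset.mem_insert.mp hy with rfl | hy'
        · exact hbeats
        · exact hwin y hy' hyx
    · have : s = ∅ := Finset.not_nonempty_iff_eq_empty.mp hse
      subst this
      refine ⟨a, Finset.mem_insert_self a ∅, ?_⟩
      intro y hy hya
      simp at hy
      exact absurd hy hya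

theorem stmt1 {X : Type} [Fintype X] [DecidableEq X] [Nonempty X]
    (ω : X → X → ℤ) (hskew : ∀ x y : X, x ≠ y → ω x y = - ω y x) :
    ∃ x : X, ∀ y : X, y ≠ x → S (ofInt ω) y x ≤ S (ofInt ω) x y := by
  obtain ⟨x, _, hx⟩ := exists_winner (ofInt ω) Finset.univ Finset.univ_nonempty
  exact ⟨x, fun y hy => hx y (Finset.mem_univ y) hy⟩

end Schulze
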